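/- Let p ≥ 5 be a prime and let m ≥ 3 be an odd integer. Then there is no integer j with 0 ≤ j ≤ pm − 1 satisfying j² − pm·j + pm + p = 0. -/
import Mathlib

/-- Equation (25): for `p ≥ 5` prime and `m ≥ 3` odd, the quadratic
`j² - pm·j + pm + p` has no integer root in `[0, pm-1]`. -/
theorem no_root_eq25 (p m : ℤ) (hp : Prime p) (hp5 : 5 ≤ p)
    (hm : 3 ≤ m) (hmodd : Odd m) :
    ¬ ∃ j : ℤ, 0 ≤ j ∧ j ≤ p * m - 1 ∧ j ^ 2 - p * m * j + p * m + p = 0 := by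
  rintro ⟨j, h0, h1, heq⟩
  have hpm : 3 * p ≤ p * m := by nlinarith
  have hj1 : 1 ≤ j := by
    rcases lt_or_ge j 1 with h | h
    · have : j = 0 := by omega
      subst this; nlinarith
    · exact h
  have hj2 : 2 ≤ j := by
    rcases lt_or_ge j 2 with h | h
    · have : j = 1 := by omega
      subst this; nlinarith
    · exact h
  have hb2 : j ≤ p * m - 2 := by
    by_contra h
    have : j = p * m - 1 := by omega
    subst this; nlinarith
  nlinarith [mul_nonneg (by omega : (0:ℤ) ≤ j - 2) (by omega : (0:ℤ) ≤ p * m - 2 - j)]
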